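/- Let p be a real polynomial of degree n ≥ 1 that has n distinct real roots (i.e., p splits over ℝ and its root multiset has n distinct elements). If c ∈ ℝ satisfies p'(c) = 0, then p(c)·p''(c) < 0, where p' and p'' denote the first and second derivatives of p. -/

import Mathlib

open Polynomial

lemma deriv_prod_lin (t : Finset ℝ) :
    derivative (∏ r ∈ t, (X - C r)) = ∑ r ∈ t, ∏ j ∈ t.erase r, (X - C j) := by
  rw [Finset.prod_eq_multiset_prod, derivative_prod, Finset.sum_eq_multiset_sum]
  congr 1
  apply Multiset.map_congr rfl
  intro i hi
  rw [derivative_X_sub_C, mul_one, ← Finset.erase_val, ← Finset.prod_eq_multiset_prod]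

lemma key (t : Finset ℝ) (ht : t.Nonempty) (a : ℝ) (ha : a ≠ 0) (c : ℝ)
    (hc : (derivative (C a * ∏ r ∈ t, (X - C r))).eval c = 0) :
    (C a * ∏ r ∈ t, (X - C r)).eval c *
      ((derivative (derivative (C a * ∏ r ∈ t, (X - C r)))).eval c) < 0 := by
  have h1 : (derivative (C a * ∏ r ∈ t, (X - C r))).eval c
      = a * ∑ r ∈ t, ∏ j ∈ t.erase r, (c - j) := by
    rw [derivative_C_mul, deriv_prod_lin]
    simp [eval_finset_sum, eval_prod]
  have h2 : ((derivative (derivative (C a * ∏ r ∈ t, (X - C r))))).eval c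
      = a * ∑ r ∈ t, ∑ j ∈ t.erase r, ∏ k ∈ (t.erase r).erase j, (c - k) := by
    rw [derivative_C_mul, deriv_prod_lin, derivative_C_mul, derivative_sum]
    simp only [deriv_prod_lin]
    simp [eval_finset_sum, eval_prod]
  have h0 : (C a * ∏ r ∈ t, (X - C r)).eval c = a * ∏ r ∈ t, (c - r) := by
    simp [eval_prod]
  have hct : c ∉ t := by
    intro hmem
    rw [h1] at hc
    have hsum : ∑ r ∈ t, ∏ j ∈ t.erase r, (c - j) = ∏ j ∈ t.erase c, (c - j) := by
      rw [← Finset.add_sum_erase t _ hmem]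
      have hz : ∑ r ∈ t.erase c, ∏ j ∈ t.erase r, (c - j) = 0 := by
        apply Finset.sum_eq_zero
        intro r hr
        apply Finset.prod_eq_zero (i := c)
        · exact Finset.mem_erase.mpr ⟨Ne.symm (Finset.mem_erase.mp hr).1, hmem⟩
        · simp
      rw [hz, add_zero]
    rw [hsum] at hc
    have hnz : ∏ j ∈ t.erase c, (c - j) ≠ 0 := by
      apply Finset.prod_ne_zero_iff.mpr
      intro j hj
      exact sub_ne_zero.mpr (Ne.symm (Finset.mem_erase.mp hj).1)
    rcases mul_eq_zero.mp hc with h | h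
    exacts [ha h, hnz h]
  have hne : ∀ r ∈ t, c - r ≠ 0 := fun r hr => sub_ne_zero.mpr (fun h => hct (h ▸ hr))
  set P : ℝ := ∏ r ∈ t, (c - r) with hP
  have hPne : P ≠ 0 := Finset.prod_ne_zero_iff.mpr (fun r hr => hne r hr)
  have hQ : ∀ r ∈ t, ∏ j ∈ t.erase r, (c - j) = P * (c - r)⁻¹ := by
    intro r hr
    rw [eq_mul_inv_iff_mul_eq₀ (hne r hr)]
    exact Finset.prod_erase_mul t (fun j => c - j) hr
  have hx0 : ∑ r ∈ t, (c - r)⁻¹ = 0 := by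
    rw [h1] at hc
    have he : ∑ r ∈ t, ∏ j ∈ t.erase r, (c - j) = P * ∑ r ∈ t, (c - r)⁻¹ := by
      rw [Finset.mul_sum]; exact Finset.sum_congr rfl hQ
    rw [he] at hc
    rcases mul_eq_zero.mp hc with h | h
    · exact absurd h ha
    · rcases mul_eq_zero.mp h with h | h
      · exact absurd h hPne
      · exact h
  have hinner : ∀ r ∈ t, ∑ j ∈ t.erase r, ∏ k ∈ (t.erase r).erase j, (c - k)
      = -(P * ((c - r)⁻¹)^2) := by
    intro r hr
    have hQr : ∀ j ∈ t.erase r, ∏ k ∈ (t.erase r).erase j, (c - k)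
        = (P * (c - r)⁻¹) * (c - j)⁻¹ := by
      intro j hj
      have hjt : j ∈ t := (Finset.mem_erase.mp hj).2
      rw [eq_mul_inv_iff_mul_eq₀ (hne j hjt), ← hQ r hr]
      exact Finset.prod_erase_mul (t.erase r) (fun k => c - k) hj
    rw [Finset.sum_congr rfl hQr, ← Finset.mul_sum]
    have hs : ∑ j ∈ t.erase r, (c - j)⁻¹ = -(c - r)⁻¹ := by
      have := Finset.add_sum_erase t (fun j => (c - j)⁻¹) hr
      rw [hx0] at this
      linarith
    rw [hs]; ring
  rw [h0, h2, Finset.sum_congr rfl hinner]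
  have hsn : ∑ r ∈ t, -(P * ((c - r)⁻¹)^2) = -(P * ∑ r ∈ t, ((c - r)⁻¹)^2) := by
    rw [Finset.mul_sum]
    exact Finset.sum_neg_distrib (f := fun r => P * ((c - r)⁻¹)^2)
  rw [hsn]
  have hpos : 0 < ∑ r ∈ t, ((c - r)⁻¹)^2 := by
    apply Finset.sum_pos _ ht
    intro r hr
    exact (sq_nonneg _).lt_of_ne (Ne.symm (pow_ne_zero 2 (inv_ne_zero (hne r hr))))
  have hre : a * P * (a * -(P * ∑ r ∈ t, ((c - r)⁻¹)^2))
      = -((a * P)^2 * ∑ r ∈ t, ((c - r)⁻¹)^2) := by ring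
  rw [hre]
  have haP : 0 < (a * P)^2 :=
    (sq_nonneg _).lt_of_ne (Ne.symm (pow_ne_zero 2 (mul_ne_zero ha hPne)))
  nlinarith

/-- If `p` is a real polynomial of degree `n ≥ 1` with `n` distinct real roots
and `c` is a critical point of `p` (i.e. `p'(c) = 0`), then
`p(c) · p''(c) < 0`. -/
theorem eval_mul_eval_second_deriv_neg_of_distinct_roots
    (p : Polynomial ℝ) (n : ℕ) (hn : 1 ≤ n)
    (hdeg : p.natDegree = n)
    (hsplit : p.Splits)
    (hdist : p.roots.toFinset.card = n)
    (c : ℝ) (hc : (Polynomial.derivative p).eval c = 0) :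
    p.eval c * ((Polynomial.derivative (Polynomial.derivative p)).eval c) < 0 := by
  have hp0 : p ≠ 0 := by
    intro h
    rw [h] at hdeg
    simp at hdeg
    omega
  have hcard : Multiset.card p.roots = n := by
    have := hsplit.natDegree_eq_card_roots
    rw [hdeg] at this; omega
  have hnodup : p.roots.Nodup := by
    rw [← Multiset.toFinset_card_eq_card_iff_nodup, hdist, hcard]
  set t : Finset ℝ := p.roots.toFinset with htdef
  have htval : t.val = p.roots := by
    rw [htdef]
    exact Multiset.dedup_eq_self.mpr hnodup
  have hrepr : p = C p.leadingCoeff * ∏ r ∈ t, (X - C r) := by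
    rw [Finset.prod_eq_multiset_prod, htval]
    exact hsplit.eq_prod_roots
  have htne : t.Nonempty := by
    apply Finset.card_pos.mp
    rw [hdist]; omega
  have ha : p.leadingCoeff ≠ 0 := leadingCoeff_ne_zero.mpr hp0
  rw [hrepr] at hc ⊢
  exact key t htne _ ha c hc
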